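/- The first alternative deformation J_n^{(1,μ)}(x) = Σ_{k≥0} (−1)^k/(k! [k+n]_μ!) (x/2)^{2k+n} satisfies x D_μ J_n^{(1,μ)}(x) = −x J_{n+1}^{(1,μ)}(x) + [n]_μ J_n^{(1,μ)}(x). -/

import Mathlib

/-- The Dunkl operator `D_μ f(x) = f'(x) + μ (f(x) - f(-x))/x`. -/
noncomputable def dunkl (μ : ℝ) (f : ℝ → ℝ) (x : ℝ) : ℝ :=
  deriv f x + μ * (f x - f (-x)) / x

/-- The deformed integer `[n]_μ = n + μ (1 - (-1)^n)`. -/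
noncomputable def dIdx (μ : ℝ) (n : ℕ) : ℝ := n + μ * (1 - (-1 : ℝ) ^ n)

/-- The deformed factorial `[n]_μ!`. -/
noncomputable def dFact (μ : ℝ) : ℕ → ℝ
  | 0 => 1
  | n + 1 => dIdx μ (n + 1) * dFact μ n

/-- The first alternative deformed Bessel function `J_n^{(1,μ)}`. -/
noncomputable def J1mu (μ : ℝ) (n : ℕ) (x : ℝ) : ℝ :=
  ∑' k : ℕ, (-1 : ℝ) ^ k / ((Nat.factorial k) * dFact μ (k + n)) * (x / 2) ^ (2 * k + n)

noncomputable def Jc (μ : ℝ) (n : ℕ) (k : ℕ) : ℝ :=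
  (-1 : ℝ) ^ k / ((Nat.factorial k) * dFact μ (k + n))

noncomputable def Jg (μ : ℝ) (n k : ℕ) (z : ℝ) : ℝ := Jc μ n k * (z / 2) ^ (2 * k + n)

noncomputable def Jg' (μ : ℝ) (n k : ℕ) (z : ℝ) : ℝ :=
  Jc μ n k * ((2 * k + n : ℕ) * (z / 2) ^ (2 * k + n - 1) * (1 / 2))

lemma nat_le_dIdx (μ : ℝ) (hμ : 0 ≤ μ) (m : ℕ) : (m : ℝ) ≤ dIdx μ m := by
  unfold dIdx
  rcases Nat.even_or_odd m with h | h
  · simp [h.neg_one_pow]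
  · simp [h.neg_one_pow]; nlinarith

lemma one_le_dFact (μ : ℝ) (hμ : 0 ≤ μ) : ∀ m, (1 : ℝ) ≤ dFact μ m
  | 0 => le_refl 1
  | m + 1 => by
    have h1 := one_le_dFact μ hμ m
    have h2 : (1 : ℝ) ≤ dIdx μ (m + 1) := by
      have := nat_le_dIdx μ hμ (m + 1)
      push_cast at this; linarith
    show (1 : ℝ) ≤ dIdx μ (m + 1) * dFact μ m
    nlinarith

lemma abs_Jc_le (μ : ℝ) (hμ : 0 ≤ μ) (n k : ℕ) :
    |Jc μ n k| ≤ 1 / (Nat.factorial k : ℝ) := by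
  have hd := one_le_dFact μ hμ (k + n)
  have hk : (0 : ℝ) < Nat.factorial k := by exact_mod_cast k.factorial_pos
  rw [Jc, abs_div, abs_pow, abs_neg, abs_one, one_pow,
    abs_of_pos (by nlinarith : (0:ℝ) < (Nat.factorial k : ℝ) * dFact μ (k+n))]
  apply one_div_le_one_div_of_le hk
  nlinarith

lemma Jg_hasDeriv (μ : ℝ) (n k : ℕ) (z : ℝ) : HasDerivAt (Jg μ n k) (Jg' μ n k z) z := by
  have h : HasDerivAt (fun z : ℝ => z / 2) (1 / 2) z := (hasDerivAt_id z).div_const 2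
  exact HasDerivAt.const_mul (Jc μ n k) (h.pow (2 * k + n))

lemma summable_u (R : ℝ) (n : ℕ) :
    Summable (fun k : ℕ => R ^ (2 * k + n) / (Nat.factorial k : ℝ)) := by
  refine Summable.congr (((Real.summable_pow_div_factorial (R ^ 2))).mul_left (R ^ n)) ?_
  intro k
  rw [pow_add, pow_mul]
  ring

lemma natcast_le_two_pow (m : ℕ) : (m : ℝ) ≤ 2 ^ m := by
  have := Nat.lt_two_pow_self (n := m)
  calc (m : ℝ) ≤ ((2 ^ m : ℕ) : ℝ) := by exact_mod_cast this.le
    _ = 2 ^ m := by push_cast; ring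

lemma key_pow (R : ℝ) (hR : 1 ≤ R) (m : ℕ) :
    2 ^ m * (R / 2) ^ (m - 1) * (1 / 2) ≤ R ^ m := by
  cases m with
  | zero => norm_num
  | succ p =>
    have e : (2:ℝ) ^ (p+1) * (R / 2) ^ ((p+1) - 1) * (1/2) = (2 * (R/2)) ^ p := by
      rw [mul_pow, pow_succ]
      simp only [Nat.add_sub_cancel]
      ring
    rw [e, show (2:ℝ) * (R/2) = R from by ring, pow_succ]
    nlinarith [pow_nonneg (by linarith : (0:ℝ) ≤ R) p]

lemma norm_Jg'_le (μ : ℝ) (hμ : 0 ≤ μ) (n k : ℕ) (y R : ℝ) (hR : 1 ≤ R) (hy : |y| ≤ R) :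
    ‖Jg' μ n k y‖ ≤ R ^ (2 * k + n) / (Nat.factorial k : ℝ) := by
  have h1 := abs_Jc_le μ hμ n k
  have h2 : ((2*k+n : ℕ) : ℝ) ≤ 2 ^ (2*k+n) := natcast_le_two_pow (2 * k + n)
  have h3 : |y / 2| ≤ R / 2 := by rw [abs_div]; simp; linarith
  have hk : (0 : ℝ) < Nat.factorial k := by exact_mod_cast k.factorial_pos
  have hcalc : ‖Jg' μ n k y‖
      = |Jc μ n k| * (((2*k+n : ℕ) : ℝ) * |y/2| ^ (2*k+n-1) * (1/2)) := by
    rw [Real.norm_eq_abs, Jg', abs_mul, abs_mul, abs_mul, abs_pow,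
      abs_of_nonneg (by positivity : (0:ℝ) ≤ ((2*k+n : ℕ) : ℝ)), abs_of_pos (by norm_num : (0:ℝ) < 1/2)]
  rw [hcalc]
  have hpow : |y/2| ^ (2*k+n-1) ≤ (R/2) ^ (2*k+n-1) :=
    pow_le_pow_left₀ (abs_nonneg _) h3 _
  have inner : ((2*k+n : ℕ) : ℝ) * |y/2| ^ (2*k+n-1) * (1/2)
      ≤ 2 ^ (2*k+n) * (R/2) ^ (2*k+n-1) * (1/2) := by
    apply mul_le_mul_of_nonneg_right _ (by norm_num)
    exact mul_le_mul h2 hpow (by positivity) (by positivity)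
  calc |Jc μ n k| * (((2*k+n : ℕ) : ℝ) * |y/2| ^ (2*k+n-1) * (1/2))
      ≤ (1 / (Nat.factorial k : ℝ)) * (2 ^ (2*k+n) * (R/2) ^ (2*k+n-1) * (1/2)) :=
        mul_le_mul h1 inner (by positivity) (by positivity)
    _ ≤ (1 / (Nat.factorial k : ℝ)) * R ^ (2*k+n) :=
        mul_le_mul_of_nonneg_left (key_pow R hR _) (by positivity)
    _ = R ^ (2*k+n) / (Nat.factorial k : ℝ) := by ring

lemma norm_Jg_le (μ : ℝ) (hμ : 0 ≤ μ) (n k : ℕ) (y R : ℝ) (hR : 1 ≤ R) (hy : |y| ≤ R) :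
    ‖Jg μ n k y‖ ≤ R ^ (2 * k + n) / (Nat.factorial k : ℝ) := by
  have h1 := abs_Jc_le μ hμ n k
  have h3 : |y / 2| ≤ R := by rw [abs_div]; simp; linarith
  have hk : (0 : ℝ) < Nat.factorial k := by exact_mod_cast k.factorial_pos
  rw [Real.norm_eq_abs, Jg, abs_mul, abs_pow]
  have hpow : |y/2| ^ (2*k+n) ≤ R ^ (2*k+n) := pow_le_pow_left₀ (abs_nonneg _) h3 _
  calc |Jc μ n k| * |y/2| ^ (2*k+n)
      ≤ (1 / (Nat.factorial k : ℝ)) * R ^ (2*k+n) :=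
        mul_le_mul h1 hpow (by positivity) (by positivity)
    _ = R ^ (2*k+n) / (Nat.factorial k : ℝ) := by ring

lemma norm_g2_le (μ : ℝ) (hμ : 0 ≤ μ) (n k : ℕ) (y R : ℝ) (hR : 1 ≤ R) (hy : |y| ≤ R) :
    ‖Jc μ n k * (2 * (k:ℝ)) * (y / 2) ^ (2 * k + n)‖ ≤ R ^ (2 * k + n) / (Nat.factorial k : ℝ) := by
  have h1 := abs_Jc_le μ hμ n k
  have h2 : ((2*k+n : ℕ) : ℝ) ≤ 2 ^ (2*k+n) := natcast_le_two_pow (2 * k + n)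
  have h2' : (2 * (k:ℝ)) ≤ 2 ^ (2*k+n) := by push_cast at h2; linarith [Nat.cast_nonneg (α := ℝ) n]
  have h3 : |y / 2| ≤ R / 2 := by rw [abs_div]; simp; linarith
  have hk : (0 : ℝ) < Nat.factorial k := by exact_mod_cast k.factorial_pos
  rw [Real.norm_eq_abs, abs_mul, abs_mul, abs_pow,
    abs_of_nonneg (by positivity : (0:ℝ) ≤ 2 * (k:ℝ))]
  have hpow : |y/2| ^ (2*k+n) ≤ (R/2) ^ (2*k+n) := pow_le_pow_left₀ (abs_nonneg _) h3 _
  calc |Jc μ n k| * (2 * (k:ℝ)) * |y/2| ^ (2*k+n)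
      ≤ (1 / (Nat.factorial k : ℝ)) * (2 ^ (2*k+n)) * (R/2) ^ (2*k+n) := by
        apply mul_le_mul _ hpow (by positivity) (by positivity)
        exact mul_le_mul h1 h2' (by positivity) (by positivity)
    _ = R ^ (2*k+n) / (Nat.factorial k : ℝ) := by
        rw [mul_assoc, ← mul_pow, show (2:ℝ) * (R/2) = R from by ring]
        ring

lemma J1mu_hasDerivAt (μ : ℝ) (hμ : 0 ≤ μ) (n : ℕ) (x : ℝ) :
    HasDerivAt (J1mu μ n) (∑' k, Jg' μ n k x) x := by
  set R := |x| + 1 with hRdef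
  have hR : 1 ≤ R := by have := abs_nonneg x; linarith [hRdef]
  have hu := summable_u R n
  have hmem : x ∈ Metric.ball (0:ℝ) R := by
    simp [Real.dist_eq, hRdef]
  have hball : ∀ y ∈ Metric.ball (0:ℝ) R, |y| ≤ R := by
    intro y hy
    rw [Metric.mem_ball, Real.dist_eq, sub_zero] at hy
    linarith
  have hsum0 : Summable (fun k => Jg μ n k x) :=
    Summable.of_norm_bounded hu (fun k => norm_Jg_le μ hμ n k x R hR (hball x hmem))
  exact hasDerivAt_tsum_of_isPreconnected hu Metric.isOpen_ball
    (convex_ball (0:ℝ) R).isPreconnected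
    (fun k y _ => Jg_hasDeriv μ n k y)
    (fun k y hy => norm_Jg'_le μ hμ n k y R hR (hball y hy))
    hmem hsum0 hmem


lemma term_id (μ : ℝ) (n k : ℕ) (x : ℝ) :
    x * Jg' μ n k x
      = Jc μ n k * (2 * (k:ℝ)) * (x/2) ^ (2*k+n) + (n:ℝ) * Jg μ n k x := by
  rw [Jg', Jg]
  rcases Nat.eq_zero_or_pos (2*k+n) with h | h
  · have hk : k = 0 := by omega
    have hn : n = 0 := by omega
    subst hk; subst hn
    norm_num
  · obtain ⟨p, hp⟩ : ∃ p, 2*k+n = p+1 := ⟨2*k+n-1, by omega⟩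
    rw [hp]
    simp only [Nat.add_sub_cancel]
    have hc : 2*(k:ℝ) + n = (p:ℝ) + 1 := by exact_mod_cast hp
    rw [pow_succ]
    push_cast
    linear_combination (-(Jc μ n k * (x/2)^p * (x/2))) * hc

lemma shift_id (μ : ℝ) (hμ : 0 ≤ μ) (n k : ℕ) (x : ℝ) :
    Jc μ n (k+1) * (2*(((k+1 : ℕ)):ℝ)) * (x/2)^(2*(k+1)+n)
      = -x * ((-1:ℝ)^k / ((Nat.factorial k) * dFact μ (k+(n+1))) * (x/2)^(2*k+(n+1))) := by
  have e1 : 2*(k+1)+n = (2*k+(n+1)) + 1 := by omega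
  have e2 : k+1+n = k+(n+1) := by omega
  simp only [Jc, e1, e2, pow_succ, Nat.factorial_succ]
  have hd : (0:ℝ) < dFact μ (k+(n+1)) := lt_of_lt_of_le one_pos (one_le_dFact μ hμ _)
  have hf : ((Nat.factorial k : ℝ)) ≠ 0 := by exact_mod_cast k.factorial_ne_zero
  have hk1 : ((k:ℝ)+1) ≠ 0 := by positivity
  push_cast
  field_simp


/-- `x D_μ J_n^{(1,μ)}(x) = -x J_{n+1}^{(1,μ)}(x) + [n]_μ J_n^{(1,μ)}(x)`. -/
theorem J1mu_recursion (μ : ℝ) (hμ : 0 ≤ μ) (n : ℕ) (x : ℝ) (hx : x ≠ 0) :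
    x * dunkl μ (J1mu μ n) x = -x * J1mu μ (n + 1) x + dIdx μ n * J1mu μ n x := by
  have hR : 1 ≤ |x| + 1 := by linarith [abs_nonneg x]
  have hxle : |x| ≤ |x| + 1 := by linarith
  have hu := summable_u (|x|+1) n
  have hsum_g : Summable (fun k => Jg μ n k x) :=
    Summable.of_norm_bounded hu (fun k => norm_Jg_le μ hμ n k x _ hR hxle)
  have hsum_g2 : Summable (fun k => Jc μ n k * (2*(k:ℝ)) * (x/2)^(2*k+n)) :=
    Summable.of_norm_bounded hu (fun k => norm_g2_le μ hμ n k x _ hR hxle)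
  have hsum_gn : Summable (fun k => (n:ℝ) * Jg μ n k x) := hsum_g.mul_left _
  have hder := (J1mu_hasDerivAt μ hμ n x).deriv
  have hJ : J1mu μ n x = ∑' k, Jg μ n k x := rfl
  have hpar : J1mu μ n (-x) = (-1:ℝ)^n * J1mu μ n x := by
    have h2 : (-1:ℝ)^n * J1mu μ n x = ∑' k, (-1:ℝ)^n * Jg μ n k x := (tsum_mul_left).symm
    rw [h2, show J1mu μ n (-x) = ∑' k, Jg μ n k (-x) from rfl]
    refine tsum_congr fun k => ?_
    rw [Jg, Jg, show (-x)/2 = -(x/2) from by ring, neg_pow, pow_add, pow_mul, neg_one_sq,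
      one_pow, one_mul]
    ring
  have h1 : x * deriv (J1mu μ n) x
      = (∑' k, Jc μ n k * (2*(k:ℝ)) * (x/2)^(2*k+n)) + (∑' k, (n:ℝ) * Jg μ n k x) := by
    rw [hder, ← tsum_mul_left, tsum_congr (fun k => term_id μ n k x)]
    exact Summable.tsum_add hsum_g2 hsum_gn
  have hshift : (∑' k, Jc μ n k * (2*(k:ℝ)) * (x/2)^(2*k+n)) = -x * J1mu μ (n+1) x := by
    rw [Summable.tsum_eq_zero_add hsum_g2]
    have h0 : Jc μ n 0 * (2*((0:ℕ):ℝ)) * (x/2)^(2*0+n) = 0 := by norm_num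
    rw [h0, zero_add, tsum_congr (fun k => shift_id μ hμ n k x), tsum_mul_left]
    rw [J1mu]
  have hx2 : x * (μ * (J1mu μ n x - (-1:ℝ)^n * J1mu μ n x) / x)
      = μ * ((1-(-1:ℝ)^n) * J1mu μ n x) := by
    rw [mul_comm x, div_mul_cancel₀ _ hx]; ring
  rw [dunkl, mul_add, hpar, hx2, h1, hshift, dIdx,
    show (∑' k, (n:ℝ) * Jg μ n k x) = (n:ℝ) * J1mu μ n x from by rw [tsum_mul_left, ← hJ]]
  ring
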